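/- If X = L^{a,n} is an (n,k) oblivious bit-fixing source and f : {0,1}^n -> {0,1}^m is symmetric in the coordinates outside L, then the support of f(X) has size at most k+1; consequently the statistical distance between f(X) and uniform on {0,1}^m is at least (2^m - (k+1))/2^m. -/

import Mathlib

lemma exists_perm_fix (n : ℕ) (L : Finset (Fin n)) (w w' : Fin n → Bool)
    (hcard : (Finset.univ.filter fun i => i ∉ L ∧ w i = true).card
           = (Finset.univ.filter fun i => i ∉ L ∧ w' i = true).card) :
    ∃ π : Equiv.Perm (Fin n), (∀ i ∈ L, π i = i) ∧ ∀ i, i ∉ L → w (π i) = w' i := by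
  classical
  set S := {i : Fin n // ¬ i ∈ L}
  have key : ∀ v : Fin n → Bool, Fintype.card {x : S // v x.1 = true}
      = (Finset.univ.filter fun i => i ∉ L ∧ v i = true).card := by
    intro v
    rw [Fintype.card_congr
      (Equiv.subtypeSubtypeEquivSubtypeInter (fun i : Fin n => ¬ i ∈ L) (fun i => v i = true)),
      Fintype.card_subtype]
  have hc1 : Fintype.card {x : S // w' x.1 = true} = Fintype.card {x : S // w x.1 = true} := by
    rw [key, key]; exact hcard.symm
  have hc2 : Fintype.card {x : S // ¬ w' x.1 = true} = Fintype.card {x : S // ¬ w x.1 = true} := by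
    have a1 := Fintype.card_subtype_compl (fun x : S => w' x.1 = true)
    have a2 := Fintype.card_subtype_compl (fun x : S => w x.1 = true)
    rw [a1, a2, hc1]
  let e₁ : {x : S // w' x.1 = true} ≃ {x : S // w x.1 = true} := Fintype.equivOfCardEq hc1
  let e₂ : {x : S // ¬ w' x.1 = true} ≃ {x : S // ¬ w x.1 = true} := Fintype.equivOfCardEq hc2
  let σ : Equiv.Perm S := Equiv.subtypeCongr e₁ e₂
  have hσ : ∀ x : S, w (σ x).1 = w' x.1 := by
    intro x
    by_cases h : w' x.1 = true
    · have : σ x = ((e₁ ⟨x, h⟩ : {x : S // w x.1 = true}) : S) := by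
        show (Equiv.sumCompl _) (Sum.map e₁ e₂ ((Equiv.sumCompl _).symm x)) = _
        rw [Equiv.sumCompl_symm_apply_of_pos (p := fun y : S => w' y.1 = true) h]
        rfl
      rw [this, (e₁ ⟨x, h⟩).2, h]
    · have hs : σ x = ((e₂ ⟨x, h⟩ : {x : S // ¬ w x.1 = true}) : S) := by
        show (Equiv.sumCompl _) (Sum.map e₁ e₂ ((Equiv.sumCompl _).symm x)) = _
        rw [Equiv.sumCompl_symm_apply_of_neg (p := fun y : S => w' y.1 = true) h]
        rfl
      have h2 := (e₂ ⟨x, h⟩).2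
      rw [hs]
      simp only [Bool.not_eq_true] at h h2
      rw [h, h2]
  refine ⟨Equiv.Perm.subtypeCongr (p := fun i => i ∈ L) (Equiv.refl _) σ, ?_, ?_⟩
  · intro i hi
    rw [Equiv.Perm.subtypeCongr.left_apply _ _ hi]
    rfl
  · intro i hi
    rw [Equiv.Perm.subtypeCongr.right_apply _ _ hi]
    exact hσ ⟨i, hi⟩

/-- If `f` is symmetric in the coordinates outside `L`, then `f(L^{a,n})` has support
of size at most `k+1`, and hence its statistical distance from uniform on `{0,1}^m`
is at least `(2^m - (k+1))/2^m`. -/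
theorem symmetric_support_small (n k m : ℕ) (hk : k ≤ n)
    (L : Finset (Fin n)) (hL : L.card = n - k)
    (f : (Fin n → Bool) → (Fin m → Bool)) (a : Fin n → Bool)
    (hsym : ∀ π : Equiv.Perm (Fin n), (∀ i ∈ L, π i = i) → ∀ w, f (w ∘ π) = f w) :
    ((Finset.univ.filter fun w : Fin n → Bool => ∀ i ∈ L, w i = a i).image f).card ≤ k + 1 ∧
    ((2 ^ m : ℝ) - (k + 1)) / 2 ^ m ≤
      (1 / 2 : ℝ) * ∑ y : Fin m → Bool,
        |((Finset.univ.filter fun w : Fin n → Bool =>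
            (∀ i ∈ L, w i = a i) ∧ f w = y).card : ℝ) / 2 ^ k - 1 / 2 ^ m| := by
  classical
  set s := Finset.univ.filter (fun w : Fin n → Bool => ∀ i ∈ L, w i = a i) with hs
  set cnt := fun w : Fin n → Bool => (Finset.univ.filter fun i => i ∉ L ∧ w i = true).card
    with hcnt
  have hconst : ∀ w ∈ s, ∀ w' ∈ s, cnt w = cnt w' → f w = f w' := by
    intro w hw w' hw' hc
    obtain ⟨π, hπL, hπ⟩ := exists_perm_fix n L w w' hc
    have hwmem : ∀ i ∈ L, w i = a i := (Finset.mem_filter.mp hw).2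
    have hw'mem : ∀ i ∈ L, w' i = a i := (Finset.mem_filter.mp hw').2
    have hcomp : w ∘ π = w' := by
      funext i
      by_cases hi : i ∈ L
      · simp only [Function.comp_apply, hπL i hi, hwmem i hi, hw'mem i hi]
      · exact hπ i hi
    rw [← hsym π hπL w, hcomp]
  -- support bound
  have himg : (s.image f).card ≤ k + 1 := by
    set g : ℕ → (Fin m → Bool) :=
      fun t => if h : ∃ w, w ∈ s ∧ cnt w = t then f h.choose else default with hg
    have hsub : s.image f ⊆ (s.image cnt).image g := by
      intro y hy
      obtain ⟨w, hw, rfl⟩ := Finset.mem_image.mp hy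
      refine Finset.mem_image.mpr ⟨cnt w, Finset.mem_image_of_mem _ hw, ?_⟩
      have hex : ∃ w', w' ∈ s ∧ cnt w' = cnt w := ⟨w, hw, rfl⟩
      rw [hg]
      simp only [hex, dif_pos]
      exact hconst _ hex.choose_spec.1 _ hw hex.choose_spec.2
    have hrange : s.image cnt ⊆ Finset.range (k + 1) := by
      intro t ht
      obtain ⟨w, _, rfl⟩ := Finset.mem_image.mp ht
      rw [Finset.mem_range, Nat.lt_succ_iff]
      have h1 : (Finset.univ.filter fun i => i ∉ L ∧ w i = true) ⊆ Finset.univ \ L := by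
        intro i hi
        simp only [Finset.mem_filter] at hi
        simp [hi.2.1]
      calc cnt w ≤ (Finset.univ \ L).card := Finset.card_le_card h1
        _ = n - (n - k) := by
            rw [Finset.card_sdiff_of_subset (Finset.subset_univ L), hL, Finset.card_univ,
              Fintype.card_fin]
        _ = k := by omega
    calc (s.image f).card ≤ ((s.image cnt).image g).card := Finset.card_le_card hsub
      _ ≤ (s.image cnt).card := Finset.card_image_le
      _ ≤ (Finset.range (k + 1)).card := Finset.card_le_card hrange
      _ = k + 1 := Finset.card_range _
  refine ⟨himg, ?_⟩
  -- s.card = 2 ^ k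
  have hScard : s.card = 2 ^ k := by
    have hbij : s.card = Fintype.card ({i : Fin n // ¬ i ∈ L} → Bool) := by
      rw [← Finset.card_univ]
      apply Finset.card_bij' (fun w _ => fun x : {i : Fin n // ¬ i ∈ L} => w x.1)
        (fun u _ => fun i => if h : i ∈ L then a i else u ⟨i, h⟩)
      · intro w hw; exact Finset.mem_univ _
      · intro u hu
        refine Finset.mem_filter.mpr ⟨Finset.mem_univ _, fun i hi => ?_⟩
        simp [hi]
      · intro w hw
        funext i
        by_cases hi : i ∈ L
        · simp only [hi, dif_pos]
          exact ((Finset.mem_filter.mp hw).2 i hi).symm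
        · simp [hi]
      · intro u hu
        funext x
        simp [x.2]
    rw [hbij, Fintype.card_fun, Fintype.card_bool, Fintype.card_subtype]
    congr 1
    have : (Finset.univ.filter fun i : Fin n => ¬ i ∈ L) = Finset.univ \ L := by
      ext i; simp
    rw [this, Finset.card_sdiff_of_subset (Finset.subset_univ L), hL, Finset.card_univ, Fintype.card_fin]
    omega
  -- notation
  set T := s.image f with hT
  have hfilter : ∀ y : Fin m → Bool,
      (Finset.univ.filter fun w : Fin n → Bool => (∀ i ∈ L, w i = a i) ∧ f w = y)
        = s.filter (fun w => f w = y) := by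
    intro y; rw [hs, Finset.filter_filter]
  have hsum_counts : ∑ y : Fin m → Bool, ((s.filter (fun w => f w = y)).card : ℝ)
      = (s.card : ℝ) := by
    rw [← Nat.cast_sum]
    congr 1
    exact (Finset.card_eq_sum_card_fiberwise (fun w _ => Finset.mem_univ (f w))).symm
  have hzero : ∀ y ∉ T, (s.filter (fun w => f w = y)) = ∅ := by
    intro y hy
    rw [Finset.filter_eq_empty_iff]
    intro w hw hfw
    exact hy (Finset.mem_image.mpr ⟨w, hw, hfw⟩)
  set u : ℝ := 1 / 2 ^ m with hu
  set P : (Fin m → Bool) → ℝ := fun y => ((s.filter (fun w => f w = y)).card : ℝ) / 2 ^ k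
    with hP
  have hsumP : ∑ y : Fin m → Bool, P y = 1 := by
    rw [hP]
    rw [← Finset.sum_div, hsum_counts, hScard]
    field_simp
    norm_cast
  have hNcard : (Finset.univ : Finset (Fin m → Bool)).card = 2 ^ m := by
    rw [Finset.card_univ, Fintype.card_fun, Fintype.card_bool, Fintype.card_fin]
  -- split the sum
  have hsplit : ∑ y : Fin m → Bool, |P y - u|
      = ∑ y ∈ T, |P y - u| + ∑ y ∈ Tᶜ, |P y - u| := (Finset.sum_add_sum_compl T _).symm
  have hcompl : ∑ y ∈ Tᶜ, |P y - u| = ((2 ^ m - T.card : ℝ)) * u := by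
    have : ∀ y ∈ Tᶜ, |P y - u| = u := by
      intro y hy
      rw [Finset.mem_compl] at hy
      rw [hP]
      simp only [hzero y hy, Finset.card_empty, Nat.cast_zero, zero_div, zero_sub, abs_neg]
      rw [abs_of_nonneg (by positivity)]
    have hN2 : Fintype.card (Fin m → Bool) = 2 ^ m := by
      rw [Fintype.card_fun, Fintype.card_bool, Fintype.card_fin]
    have hle : T.card ≤ Fintype.card (Fin m → Bool) := by
      rw [← Finset.card_univ]; exact Finset.card_le_univ T
    rw [Finset.sum_congr rfl this, Finset.sum_const, Finset.card_compl, nsmul_eq_mul,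
      Nat.cast_sub hle, hN2]
    push_cast
    ring
  have hTsum : ∑ y ∈ T, |P y - u| ≥ 1 - T.card * u := by
    have h1 : ∑ y ∈ T, |P y - u| ≥ ∑ y ∈ T, (P y - u) :=
      Finset.sum_le_sum fun y _ => le_abs_self _
    have h2 : ∑ y ∈ T, (P y - u) = (∑ y ∈ T, P y) - T.card * u := by
      rw [Finset.sum_sub_distrib, Finset.sum_const, nsmul_eq_mul]
    have h3 : ∑ y ∈ T, P y = 1 := by
      rw [← hsumP]
      apply Finset.sum_subset (Finset.subset_univ T)
      intro y _ hy
      rw [hP]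
      simp [hzero y hy]
    linarith [h1, h2 ▸ h1, h3]
  -- finish
  have hTcard : (T.card : ℝ) ≤ k + 1 := by exact_mod_cast himg
  have hupos : (0:ℝ) < 2 ^ m := by positivity
  have hinv : (2:ℝ) ^ m * (1 / 2 ^ m) = 1 := by field_simp
  have hfinal : ∑ y : Fin m → Bool, |P y - u| ≥ 2 * ((2 ^ m - (k+1)) / 2 ^ m) := by
    have hcompl' : ∑ y ∈ Tᶜ, |P y - u| = 2 ^ m * (1/2^m) - (T.card : ℝ) * (1/2^m) := by
      rw [hcompl, hu]; ring
    have hTu : (T.card : ℝ) * (1/2^m) ≤ ((k:ℝ)+1) * (1/2^m) :=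
      mul_le_mul_of_nonneg_right hTcard (by positivity)
    have hTsum' : ∑ y ∈ T, |P y - u| ≥ 1 - (T.card : ℝ) * (1/2^m) := by
      have := hTsum
      rw [hu] at this
      exact this
    have hdiv : 2 * (((2:ℝ) ^ m - ((k:ℝ)+1)) / 2 ^ m)
        = 2 * (2 ^ m * (1/2^m)) - 2 * (((k:ℝ)+1) * (1/2^m)) := by ring
    rw [hsplit, hdiv, hinv]
    linarith [hcompl', hTsum', hTu]
  calc ((2 ^ m : ℝ) - (k + 1)) / 2 ^ m
      = (1/2) * (2 * ((2 ^ m - (k+1)) / 2 ^ m)) := by ring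
    _ ≤ (1/2) * ∑ y : Fin m → Bool, |P y - u| := by linarith [hfinal]
    _ = (1 / 2 : ℝ) * ∑ y : Fin m → Bool,
        |((Finset.univ.filter fun w : Fin n → Bool =>
            (∀ i ∈ L, w i = a i) ∧ f w = y).card : ℝ) / 2 ^ k - 1 / 2 ^ m| := by
        congr 1
        apply Finset.sum_congr rfl
        intro y _
        rw [hP, hu, hfilter y]
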